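/- The class of separated locally proper maps of topological spaces is closed under composition. -/

import Mathlib

open Set Topology Filter

/-- Locally proper (in the sense of the paper): every point `y` and neighborhood `V` of `y`
admit neighborhoods `U ∋ f y` and `N ⊆ f⁻¹' U ∩ V` of `y` such that the restriction
`N → U` of `f` is proper, i.e. separated and universally closed. -/
def IsLocallyProper {Y S : Type*} [TopologicalSpace Y] [TopologicalSpace S]
    (f : Y → S) : Prop :=
  ∀ y : Y, ∀ V ∈ 𝓝 y, ∃ N ∈ 𝓝 y, ∃ U ∈ 𝓝 (f y), N ⊆ f ⁻¹' U ∩ V ∧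
    ∃ hm : Set.MapsTo f N U,
      IsSeparatedMap (hm.restrict f N U) ∧ IsProperMap (hm.restrict f N U)

/-- A restriction of a separated map is separated. -/
lemma sep_restrict {Y S : Type*} [TopologicalSpace Y] [TopologicalSpace S]
    {f : Y → S} (hsep : IsSeparatedMap f) {N : Set Y} {U : Set S}
    (hm : Set.MapsTo f N U) : IsSeparatedMap (hm.restrict f N U) := by
  intro x₁ x₂ he hne
  obtain ⟨s₁, s₂, o₁, o₂, m₁, m₂, d⟩ :=
    hsep x₁ x₂ (congrArg Subtype.val he) (fun h => hne (Subtype.ext h))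
  exact ⟨Subtype.val ⁻¹' s₁, Subtype.val ⁻¹' s₂, o₁.preimage continuous_subtype_val,
    o₂.preimage continuous_subtype_val, m₁, m₂, d.preimage _⟩

/-- Shrinking the target of a proper restriction keeps it proper. -/
lemma proper_shrink {Y S : Type*} [TopologicalSpace Y] [TopologicalSpace S]
    {f : Y → S} (hfc : Continuous f) {N : Set Y} {U M : Set S}
    (hm : Set.MapsTo f N U) (hp : IsProperMap (hm.restrict f N U)) (hMU : M ⊆ U)
    (hm' : Set.MapsTo f (N ∩ f ⁻¹' M) M) :
    IsProperMap (hm'.restrict f (N ∩ f ⁻¹' M) M) := by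
  rw [isProperMap_iff_ultrafilter]
  refine ⟨hfc.restrict hm', ?_⟩
  intro 𝒰 y hy
  set ι : (N ∩ f ⁻¹' M : Set Y) → N := Set.inclusion Set.inter_subset_left with hι
  have hv : Tendsto (fun x : (N ∩ f ⁻¹' M : Set Y) => f x.1) 𝒰 (𝓝 (y : S)) :=
    tendsto_subtype_rng.mp hy
  have hyU : (y : S) ∈ U := hMU y.2
  have h2 : Tendsto (hm.restrict f N U) (𝒰.map ι) (𝓝 ⟨(y : S), hyU⟩) := by
    rw [Ultrafilter.coe_map, tendsto_map'_iff, tendsto_subtype_rng]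
    exact hv
  obtain ⟨x, hx1, hx2⟩ := hp.ultrafilter_le_nhds_of_tendsto h2
  have hfx : f x.1 = (y : S) := congrArg Subtype.val hx1
  refine ⟨⟨x.1, x.2, show f x.1 ∈ M from hfx ▸ y.2⟩, Subtype.ext hfx, ?_⟩
  rw [Ultrafilter.coe_map] at hx2
  have h3 : (𝒰 : Filter _) ≤ comap ι (𝓝 x) := map_le_iff_le_comap.mp hx2
  rw [nhds_subtype_eq_comap] at h3
  refine le_of_le_of_eq ?_ nhds_subtype_eq_comap.symm
  rw [comap_comap] at h3
  exact h3

/-- The class of separated locally proper maps is closed under composition. -/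
theorem stmt_2 {X Y Z : Type*} [TopologicalSpace X] [TopologicalSpace Y]
    [TopologicalSpace Z] (f : X → Y) (g : Y → Z)
    (hfc : Continuous f) (hgc : Continuous g)
    (hfs : IsSeparatedMap f) (hgs : IsSeparatedMap g)
    (hf : IsLocallyProper f) (hg : IsLocallyProper g) :
    IsSeparatedMap (g ∘ f) ∧ IsLocallyProper (g ∘ f) := by
  have hsep : IsSeparatedMap (g ∘ f) := by
    intro x₁ x₂ he hne
    by_cases hfe : f x₁ = f x₂
    · exact hfs x₁ x₂ hfe hne
    · obtain ⟨s₁, s₂, o₁, o₂, m₁, m₂, d⟩ := hgs (f x₁) (f x₂) he hfe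
      exact ⟨f ⁻¹' s₁, f ⁻¹' s₂, o₁.preimage hfc, o₂.preimage hfc, m₁, m₂, d.preimage _⟩
  refine ⟨hsep, ?_⟩
  intro x V hV
  obtain ⟨N₁, hN₁, U₁, hU₁, hsub₁, hm₁, hsep₁, hp₁⟩ := hf x V hV
  obtain ⟨M, hM, W, hW, hsub₂, hm₂, hsep₂, hp₂⟩ := hg (f x) U₁ hU₁
  have hMU₁ : M ⊆ U₁ := fun y hy => (hsub₂ hy).2
  refine ⟨N₁ ∩ f ⁻¹' M, Filter.inter_mem hN₁ (hfc.continuousAt.preimage_mem_nhds hM),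
    W, hW, ?_, ?_⟩
  · rintro x' ⟨hx1, hx2⟩
    exact ⟨(hsub₂ hx2).1, (hsub₁ hx1).2⟩
  · have hmNM : Set.MapsTo f (N₁ ∩ f ⁻¹' M) M := fun _ hx => hx.2
    have hm : Set.MapsTo (g ∘ f) (N₁ ∩ f ⁻¹' M) W := fun _ hx => hm₂ hx.2
    refine ⟨hm, sep_restrict hsep hm, ?_⟩
    have heq : hm.restrict (g ∘ f) (N₁ ∩ f ⁻¹' M) W =
        (hm₂.restrict g M W) ∘ (hmNM.restrict f (N₁ ∩ f ⁻¹' M) M) := rfl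
    rw [heq]
    exact hp₂.comp (proper_shrink hfc hm₁ hp₁ hMU₁ hmNM)
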